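/- For a finite field 𝔽_q of odd characteristic with nontrivial additive character ψ, and any h_1,…,h_n, h_{2n}, b ∈ 𝔽_q^×, the sum ∑_{t_1,…,t_n ∈ 𝔽_q^×} ψ((t_1/t_2)h_1 + ⋯ + (t_{n−1}/t_n)h_{n−1} + t_n h_n + (b/(t_1 t_2)) h_{2n}) equals the generalized Kloosterman sum Kl_{h_1 h_2² ⋯ h_n² h_{2n} b}^{n+1}(ψ; 1, 2, …, 2, 1). -/

import Mathlib

open Finset

section Aux
variable {G : Type*} [CommGroup G] {n : ℕ}

lemma myIci_castSucc (j : Fin n) :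
    Finset.Ici (j.castSucc) = insert j.castSucc (Finset.Ici j.succ) := by
  ext i
  simp only [Finset.mem_Ici, Finset.mem_insert, Fin.le_def, Fin.ext_iff,
    Fin.coe_castSucc, Fin.val_succ]
  omega

lemma myprodB (s : Fin (n+1) → G) (j : Fin n) :
    ∏ i ∈ Finset.Ici j.castSucc, s i = s j.castSucc * ∏ i ∈ Finset.Ici j.succ, s i := by
  rw [myIci_castSucc, Finset.prod_insert (by
    simp only [Finset.mem_Ici]
    exact not_le.mpr Fin.castSucc_lt_succ)]

lemma myprodA (s : Fin (n+1) → G) :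
    ∏ i ∈ Finset.Ici (Fin.last n), s i = s (Fin.last n) := by
  have : Finset.Ici (Fin.last n) = {Fin.last n} := by
    ext i
    simp [Finset.mem_Ici, Fin.le_def, Fin.ext_iff]
    omega
  rw [this, Finset.prod_singleton]

/-- The prefix-product equivalence. -/
def tauEquiv (G : Type*) [CommGroup G] (n : ℕ) : (Fin (n+1) → G) ≃ (Fin (n+1) → G) where
  toFun s := fun j => ∏ i ∈ Finset.Ici j, s i
  invFun t := Fin.snoc (fun k : Fin n => t k.castSucc / t k.succ) (t (Fin.last n))
  left_inv s := by
    funext j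
    induction j using Fin.lastCases with
    | last => simp [myprodA]
    | cast k =>
      simp only [Fin.snoc_castSucc]
      rw [myprodB, mul_div_cancel_right]
  right_inv t := by
    funext j
    induction j using Fin.reverseInduction with
    | last => simp [myprodA]
    | cast k ih =>
      show ∏ i ∈ Finset.Ici k.castSucc, _ = _
      rw [myprodB]
      simp only at ih
      simp only [Fin.snoc_castSucc, ih]; exact div_mul_cancel _ _

lemma tauEquiv_apply (s : Fin (n+1) → G) (j : Fin (n+1)) :
    tauEquiv G n s j = ∏ i ∈ Finset.Ici j, s i := rfl

lemma tauEquiv_last (s : Fin (n+1) → G) : tauEquiv G n s (Fin.last n) = s (Fin.last n) :=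
  myprodA s

lemma tauEquiv_ratio (s : Fin (n+1) → G) (k : Fin n) :
    tauEquiv G n s k.castSucc / tauEquiv G n s k.succ = s k.castSucc := by
  show (∏ i ∈ Finset.Ici k.castSucc, s i) / (∏ i ∈ Finset.Ici k.succ, s i) = _
  rw [myprodB, mul_div_cancel_right]

lemma tauEquiv_zero (s : Fin (n+1) → G) : tauEquiv G n s 0 = ∏ i, s i := by
  show ∏ i ∈ Finset.Ici (0 : Fin (n+1)), s i = _
  rw [show Finset.Ici (0 : Fin (n+1)) = Finset.univ from by
    ext i; simp [Fin.zero_le]]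

end Aux



/-- The generalized Kloosterman sum Kl_a^n(ψ; b₁, …, b_n)
= ∑_{x₁^{b₁} ⋯ x_n^{b_n} = a} ψ(x₁ + ⋯ + x_n). -/
noncomputable def Kl {F : Type*} [Field F] [Fintype F] [DecidableEq F]
    (ψ : AddChar F ℂ) (n : ℕ) (b : Fin n → ℕ) (a : F) : ℂ :=
  ∑ x ∈ Finset.univ.filter (fun x : Fin n → F => ∏ i, x i ^ b i = a), ψ (∑ i, x i)

set_option maxHeartbeats 1000000

/-- For odd q, a nontrivial additive character ψ, and units h₁, …, h_n, h_{2n}, b,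
∑_{t₁,…,t_n ∈ 𝔽_q^×} ψ((t₁/t₂)h₁ + ⋯ + (t_{n-1}/t_n)h_{n-1} + t_n h_n + (b/(t₁t₂))h_{2n})
  = Kl_{h₁h₂²⋯h_n²h_{2n}b}^{n+1}(ψ; 1, 2, …, 2, 1).
Here n = m + 2 ≥ 2. -/
theorem stmt19 {F : Type*} [Field F] [Fintype F] [DecidableEq F]
    (hchar : ringChar F ≠ 2)
    (ψ : AddChar F ℂ) (hψ : ψ ≠ 1)
    (m : ℕ) (h : Fin (m + 2) → Fˣ) (h2n b : Fˣ) :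
    ∑ t : Fin (m + 2) → Fˣ,
      ψ ((∑ i : Fin (m + 1), ((t i.castSucc : F) / (t i.succ : F)) * (h i.castSucc : F))
          + (t (Fin.last (m + 1)) : F) * (h (Fin.last (m + 1)) : F)
          + ((b : F) / ((t 0 : F) * (t 1 : F))) * (h2n : F))
    = Kl ψ (m + 3)
        (fun i => if i = 0 ∨ i = Fin.last (m + 2) then 1 else 2)
        ((h 0 : F) * (∏ i : Fin (m + 1), (h i.succ : F) ^ 2) * (h2n : F) * (b : F)) := by
  classical
  set a : F := (h 0 : F) * (∏ i : Fin (m + 1), (h i.succ : F) ^ 2) * (h2n : F) * (b : F)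
    with ha
  have hprodh : (∏ i : Fin (m + 1), (h i.succ : F) ^ 2) = (∏ i : Fin (m+1), (h i.succ : F)) ^ 2 :=
    Finset.prod_pow _ _ _
  have hHne : (∏ i : Fin (m+1), (h i.succ : F)) ≠ 0 :=
    Finset.prod_ne_zero_iff.mpr fun i _ => Units.ne_zero _
  have ha0 : a ≠ 0 := by
    rw [ha, hprodh]
    exact mul_ne_zero (mul_ne_zero (mul_ne_zero (Units.ne_zero _) (pow_ne_zero _ hHne))
      (Units.ne_zero _)) (Units.ne_zero _)
  set e : Fin (m + 3) → ℕ := fun i => if i = 0 ∨ i = Fin.last (m + 2) then 1 else 2 with he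
  have he0 : e 0 = 1 := if_pos (Or.inl rfl)
  have heL : e (Fin.last (m + 2)) = 1 := if_pos (Or.inr rfl)
  have heM : ∀ k : Fin (m + 1), e (Fin.castSucc k.succ) = 2 := by
    intro k
    rw [he]
    simp only
    rw [if_neg]
    push_neg
    refine ⟨?_, (Fin.castSucc_lt_last _).ne⟩
    intro hk
    have := congrArg Fin.val hk
    simp only [Fin.coe_castSucc, Fin.val_succ, Fin.val_zero] at this
    omega
  set P : (Fin (m+2) → Fˣ) → Fˣ := fun s => ∏ k : Fin (m+1), s k.succ with hP
  have hPco : ∀ s : Fin (m+2) → Fˣ, ((P s : Fˣ) : F) = ∏ k : Fin (m+1), (s k.succ : F) := by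
    intro s
    rw [hP]
    exact map_prod (Units.coeHom F) _ _
  set A : (Fin (m+2) → Fˣ) → F := fun s =>
    (∑ i : Fin (m+2), (s i : F) * (h i : F))
      + (b : F) / ((s 0 : F) * ((P s : F)) ^ 2) * (h2n : F) with hA
  refine ((Fintype.sum_equiv (tauEquiv Fˣ (m+1)) (fun s => ψ (A s)) _ ?_).symm).trans ?_
  · -- per-s equality with the original summand
    intro s
    set T := tauEquiv Fˣ (m+1) s with hT
    congr 1
    have r1 : ∀ i : Fin (m+1), (T i.castSucc : F) / (T i.succ : F) = (s i.castSucc : F) := by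
      intro i
      rw [← Units.val_div_eq_div_val, hT, tauEquiv_ratio]
    have r2 : T (Fin.last (m+1)) = s (Fin.last (m+1)) := tauEquiv_last s
    have r3 : (T 0 : F) * (T 1 : F) = (s 0 : F) * ((P s : Fˣ) : F) ^ 2 := by
      have h2 : T 0 = s 0 * P s := by
        rw [hT, tauEquiv_zero, hP]
        exact Fin.prod_univ_succ s
      have h4 : T 0 = s 0 * T 1 := by
        rw [hT, tauEquiv_apply, tauEquiv_apply]
        have := myprodB s (0 : Fin (m+1))
        simpa [Fin.succ_zero_eq_one] using this
      have h3 : T 1 = P s := mul_left_cancel (a := s 0) (by rw [← h4, h2])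
      have : T 0 * T 1 = s 0 * (P s) ^ 2 := by
        rw [h2, h3, sq, mul_assoc]
      exact_mod_cast congrArg (Units.val) this
    have rsum : (∑ i : Fin (m+1), (T i.castSucc : F) / (T i.succ : F) * (h i.castSucc : F))
        = ∑ i : Fin (m+1), (s i.castSucc : F) * (h i.castSucc : F) :=
      Finset.sum_congr rfl fun i _ => by rw [r1 i]
    rw [hA]
    simp only
    rw [rsum, r2, r3,
      Fin.sum_univ_castSucc (f := fun i : Fin (m+2) => (s i : F) * (h i : F))]
  · -- sum over s equals the Kloosterman sum
    rw [Kl]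
    set φ : (Fin (m+2) → Fˣ) → (Fin (m+3) → F) := fun s =>
      Fin.snoc (fun i : Fin (m+2) => (s i : F) * (h i : F))
        ((b : F) / ((s 0 : F) * ((P s : F)) ^ 2) * (h2n : F)) with hφ
    set ι : (Fin (m+3) → F) → (Fin (m+2) → Fˣ) := fun x i =>
      if hx : x i.castSucc ≠ 0 then Units.mk0 _ hx / h i else 1 with hι
    have he0' : e (Fin.castSucc 0) = 1 := by rw [Fin.castSucc_zero]; exact he0
    have hprod : ∀ x : Fin (m+3) → F,
        (∏ i, x i ^ e i)
          = x (Fin.castSucc 0) * (∏ k : Fin (m+1), x k.succ.castSucc) ^ 2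
              * x (Fin.last (m+2)) := by
      intro x
      rw [Fin.prod_univ_castSucc (f := fun i => x i ^ e i),
        Fin.prod_univ_succ (f := fun j : Fin (m+2) => x j.castSucc ^ e j.castSucc)]
      simp only [he0', heL, heM, pow_one]
      rw [Finset.prod_pow]
    refine Finset.sum_nbij' φ ι ?_ ?_ ?_ ?_ ?_
    · -- membership
      intro s _
      simp only [Finset.mem_filter, Finset.mem_univ, true_and]
      rw [hprod]
      rw [hφ]
      simp only [Fin.snoc_castSucc, Fin.snoc_last]
      rw [show (∏ k : Fin (m+1), ((s k.succ : F) * (h k.succ : F)))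
            = ((P s : Fˣ) : F) * ∏ k : Fin (m+1), (h k.succ : F) from by
          rw [Finset.prod_mul_distrib, hPco]]
      rw [ha, hprodh, hPco]
      have hs0 : (s 0 : F) ≠ 0 := Units.ne_zero _
      have hS : (∏ k : Fin (m+1), (s k.succ : F)) ≠ 0 :=
        Finset.prod_ne_zero_iff.mpr fun i _ => Units.ne_zero _
      field_simp
    · intro x _
      exact Finset.mem_univ _
    · -- left inverse
      intro s _
      funext i
      have hne : φ s i.castSucc ≠ 0 := by
        rw [hφ]
        simp only [Fin.snoc_castSucc]
        exact mul_ne_zero (Units.ne_zero _) (Units.ne_zero _)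
      rw [hι]
      simp only
      rw [dif_pos hne]
      refine Units.ext ?_
      rw [Units.val_div_eq_div_val, Units.val_mk0, hφ]
      simp only [Fin.snoc_castSucc]
      exact mul_div_cancel_right₀ _ (Units.ne_zero _)
    · -- right inverse
      intro x hxmem
      simp only [Finset.mem_filter, Finset.mem_univ, true_and] at hxmem
      have hx : ∀ i, x i ≠ 0 := by
        intro i hxi
        apply ha0
        rw [← hxmem]
        refine Finset.prod_eq_zero (Finset.mem_univ i) ?_
        rw [hxi]
        refine zero_pow ?_
        rw [he]
        simp only
        split <;> simp
      have hι' : ∀ i : Fin (m+2), ((ι x i : Fˣ) : F) = x i.castSucc / (h i : F) := by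
        intro i
        rw [hι]
        simp only
        rw [dif_pos (hx _)]
        rw [Units.val_div_eq_div_val, Units.val_mk0]
      have hexp : x 0 * (∏ k : Fin (m+1), x k.succ.castSucc) ^ 2 * x (Fin.last (m+2))
          = (h 0 : F) * (∏ i : Fin (m+1), (h i.succ : F)) ^ 2 * (h2n : F) * (b : F) := by
        have := hprod x
        rw [hxmem, ha, hprodh] at this
        rw [this, Fin.castSucc_zero]
      have hPι : ((P (ι x) : Fˣ) : F)
          = (∏ k : Fin (m+1), x k.succ.castSucc) / (∏ k : Fin (m+1), (h k.succ : F)) := by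
        rw [hPco]
        rw [Finset.prod_congr rfl (fun k _ => hι' k.succ)]
        exact Finset.prod_div_distrib _ _
      funext j
      induction j using Fin.lastCases with
      | cast k =>
        rw [hφ]
        simp only [Fin.snoc_castSucc]
        rw [hι']
        exact div_mul_cancel₀ _ (Units.ne_zero _)
      | last =>
        rw [hφ]
        simp only [Fin.snoc_last]
        rw [hι' 0, hPι]
        simp only [Fin.castSucc_zero]
        have hY : (∏ k : Fin (m+1), x k.succ.castSucc) ≠ 0 :=
          Finset.prod_ne_zero_iff.mpr fun i _ => hx _
        have hx0 : x 0 ≠ 0 := hx _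
        have hh0 : (h 0 : F) ≠ 0 := Units.ne_zero _
        rw [div_pow, div_mul_div_comm]
        rw [show x (Fin.last (m+2))
            = ((h 0 : F) * (∏ i : Fin (m+1), (h i.succ : F)) ^ 2 * (h2n : F) * (b : F))
                / (x 0 * (∏ k : Fin (m+1), x k.succ.castSucc) ^ 2) from by
          rw [eq_div_iff (mul_ne_zero hx0 (pow_ne_zero _ hY))]
          linear_combination hexp]
        field_simp
    · -- summand equality
      intro s _
      congr 1
      rw [Fin.sum_univ_castSucc (f := fun i : Fin (m+3) => φ s i), hφ, hA]
      simp only [Fin.snoc_castSucc, Fin.snoc_last]
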